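/- Let Ω = [-π,π]² ⊂ ℝ², D > 0, and let G : ℝ² → ℝ be continuous and 2π-periodic with ‖G‖_∞ := sup_{x ∈ Ω} |G(x)| < 2. Suppose e : ℝ² × ℝ → ℝ is 2π-periodic in x, continuously differentiable, has zero spatial mean ∫_Ω e(x,t) dx = 0 for all t, and its energy V(t) = ∫_Ω e(x,t)² dx satisfies V'(t) = -D·∫_Ω e(x,t)²·G(x) dx - 2D·∫_Ω ‖∇_x e(x,t)‖² dx. Then V'(t) ≤ -D·(2 - ‖G‖_∞)·V(t) for all t ≥ 0, and hence V(t) ≤ V(0)·exp(-D·(2 - ‖G‖_∞)·t). -/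

import Mathlib

open MeasureTheory Real Filter

noncomputable section

/-- The plane `ℝ²`, modeled as functions `Fin 2 → ℝ`. -/
abbrev Vec2 := Fin 2 → ℝ

/-- Partial derivative of a scalar field in the `i`-th coordinate direction. -/
def pderiv2 (i : Fin 2) (f : Vec2 → ℝ) (x : Vec2) : ℝ :=
  fderiv ℝ f x (Pi.single i 1)

/-- Divergence of a vector field on `ℝ²` (trace of the Fréchet derivative). -/
def div2 (F : Vec2 → Vec2) (x : Vec2) : ℝ :=
  ∑ i, fderiv ℝ F x (Pi.single i 1) i

/-- Gradient of a scalar field on `ℝ²`. -/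
def grad2 (f : Vec2 → ℝ) (x : Vec2) : Vec2 :=
  fun i => pderiv2 i f x

/-- Laplacian of a scalar field on `ℝ²`. -/
def lap2 (f : Vec2 → ℝ) (x : Vec2) : ℝ :=
  ∑ i, pderiv2 i (pderiv2 i f) x

/-- `2π`-periodicity in both coordinates: `g (x + 2πk) = g x` for all `k ∈ ℤ²`. -/
def Per2 {E : Type*} (g : Vec2 → E) : Prop :=
  ∀ (x : Vec2) (k : Fin 2 → ℤ), g (x + fun i => 2 * π * (k i : ℝ)) = g x

/-- The periodic square `Ω = [-π, π]²`. -/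
def Omega2 : Set Vec2 := Set.Icc (fun _ => -π) (fun _ => π)

section Wirtinger
open Complex AddCircle intervalIntegral

lemma wirtinger1 (f f' : ℝ → ℝ) (hf : ∀ x, HasDerivAt f (f' x) x) (hf'c : Continuous f')
    (hper : ∀ x, f (x + 2*π) = f x) (hmean : ∫ x in (-π)..π, f x = 0) :
    ∫ x in (-π)..π, f x ^ 2 ≤ ∫ x in (-π)..π, f' x ^ 2 := by
  haveI hTfact : Fact (0 < 2*π) := ⟨Real.two_pi_pos⟩
  have hfc : Continuous f := by
    refine continuous_iff_continuousAt.2 fun x => (hf x).continuousAt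
  have hper' : ∀ x, f' (x + 2*π) = f' x := by
    intro x
    have h1 : HasDerivAt (fun y => f (y + 2*π)) (f' (x + 2*π)) x := by
      simpa [Function.comp_def] using (hf (x + 2*π)).comp x ((hasDerivAt_id x).add_const (2*π))
    have h2 : HasDerivAt f (f' (x + 2*π)) x := by
      refine h1.congr_of_eventuallyEq (Filter.Eventually.of_forall fun y => (hper y).symm)
    exact h2.unique (hf x)
  set F : ℝ → ℂ := fun x => (f x : ℂ) with hF
  set F' : ℝ → ℂ := fun x => (f' x : ℂ) with hF'
  have hFc : Continuous F := Complex.continuous_ofReal.comp hfc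
  have hF'c : Continuous F' := Complex.continuous_ofReal.comp hf'c
  have hFder : ∀ x, HasDerivAt F (F' x) x := fun x => (hf x).ofReal_comp
  have ha : F (-π) = F (-π + 2*π) := by simp [hF, hper (-π)]
  have ha' : F' (-π) = F' (-π + 2*π) := by simp [hF', hper' (-π)]
  set g : AddCircle (2*π) → ℂ := AddCircle.liftIco (2*π) (-π) F with hg
  set g' : AddCircle (2*π) → ℂ := AddCircle.liftIco (2*π) (-π) F' with hg'
  have hgc : Continuous g := AddCircle.liftIco_continuous ha hFc.continuousOn
  have hg'c : Continuous g' := AddCircle.liftIco_continuous ha' hF'c.continuousOn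
  have hab : (-π : ℝ) < -π + 2*π := by linarith [Real.pi_pos]
  have hcoe : ∀ n : ℤ, fourierCoeff g n = fourierCoeffOn hab F n := fun n =>
    fourierCoeff_liftIco_eq F n
  have hcoe' : ∀ n : ℤ, fourierCoeff g' n = fourierCoeffOn hab F' n := fun n =>
    fourierCoeff_liftIco_eq F' n
  have h2pi : (-π : ℝ) + 2*π = π := by ring
  -- zero-th coefficient vanishes
  have hc0 : fourierCoeffOn hab F 0 = 0 := by
    rw [fourierCoeffOn_eq_integral]
    simp only [neg_zero, fourier_zero, one_smul, h2pi]
    rw [hF, intervalIntegral.integral_ofReal, hmean]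
    simp
  -- coefficient comparison
  have key : ∀ n : ℤ, ‖fourierCoeffOn hab F n‖ ^ 2 ≤ ‖fourierCoeffOn hab F' n‖ ^ 2 := by
    intro n
    rcases eq_or_ne n 0 with rfl | hn
    · rw [hc0]; simpa using sq_nonneg ‖fourierCoeffOn hab F' 0‖
    have hd := fourierCoeffOn_of_hasDerivAt hab hn (fun x _ => hFder x)
      (hF'c.intervalIntegrable _ _)
    have hFb : F (-π + 2*π) - F (-π) = 0 := by rw [← ha, sub_self]
    rw [hFb, mul_zero, zero_sub] at hd
    have hnorm : ‖fourierCoeffOn hab F n‖ ≤ ‖fourierCoeffOn hab F' n‖ := by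
      have hba : ((-π + 2*π : ℝ) : ℂ) - ((-π : ℝ) : ℂ) = ((2*π : ℝ) : ℂ) := by
        push_cast; ring
      rw [hd, hba, norm_mul, norm_neg, norm_mul]
      have h1 : ‖(1 : ℂ) / (-2 * ↑π * I * ↑n)‖ = 1 / (2*π*|(n:ℝ)|) := by
        rw [norm_div, norm_one]
        congr 1
        rw [show (-2 * ↑π * I * ↑n : ℂ) = ((2*π:ℝ):ℂ) * (↑(n:ℝ)) * (-I) by push_cast; ring]
        rw [norm_mul, norm_mul, Complex.norm_real, Complex.norm_real, norm_neg, Complex.norm_I]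
        rw [Real.norm_eq_abs, Real.norm_eq_abs, abs_of_pos Real.two_pi_pos, mul_one]
      have h2 : ‖((2*π : ℝ) : ℂ)‖ = 2*π := by
        rw [Complex.norm_real, Real.norm_eq_abs, abs_of_pos Real.two_pi_pos]
      rw [h1, h2]
      have hn1 : (1:ℝ) ≤ |(n:ℝ)| := by
        rw [← Int.cast_abs]
        exact_mod_cast Int.one_le_abs hn
      have habs : 0 < |(n:ℝ)| := lt_of_lt_of_le one_pos hn1
      rw [div_mul_eq_mul_div, one_mul, div_le_iff₀ (by positivity)]
      calc 2*π * ‖fourierCoeffOn hab F' n‖ = ‖fourierCoeffOn hab F' n‖ * (2*π) * 1 := by ring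
        _ ≤ ‖fourierCoeffOn hab F' n‖ * (2*π) * |(n:ℝ)| := by
            have : (0:ℝ) ≤ ‖fourierCoeffOn hab F' n‖ * (2*π) := by positivity
            nlinarith
        _ = ‖fourierCoeffOn hab F' n‖ * (2*π*|(n:ℝ)|) := by ring
    exact pow_le_pow_left₀ (norm_nonneg _) hnorm 2
  -- Lp elements
  set L : Lp ℂ 2 (@haarAddCircle (2*π) _) :=
    ContinuousMap.toLp 2 haarAddCircle ℂ (⟨g, hgc⟩ : C(AddCircle (2*π), ℂ)) with hL
  set L' : Lp ℂ 2 (@haarAddCircle (2*π) _) :=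
    ContinuousMap.toLp 2 haarAddCircle ℂ (⟨g', hg'c⟩ : C(AddCircle (2*π), ℂ)) with hL'
  have hLcoeff : ∀ n, fourierCoeff (L : AddCircle (2*π) → ℂ) n = fourierCoeffOn hab F n := by
    intro n
    rw [hL, fourierCoeff_toLp]
    exact hcoe n
  have hL'coeff : ∀ n, fourierCoeff (L' : AddCircle (2*π) → ℂ) n = fourierCoeffOn hab F' n := by
    intro n
    rw [hL', fourierCoeff_toLp]
    exact hcoe' n
  have hsum : ∀ (h : Lp ℂ 2 (@haarAddCircle (2*π) _)),
      Summable (fun n : ℤ => ‖fourierCoeff (h : AddCircle (2*π) → ℂ) n‖ ^ 2) := by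
    intro h
    have hm : Memℓp (fun n => fourierBasis.repr h n) 2 := (fourierBasis.repr h).2
    have hs := hm.summable (by norm_num : (0:ℝ) < (2 : ENNReal).toReal)
    have : ∀ n : ℤ, ‖fourierBasis.repr h n‖ ^ ((2 : ENNReal).toReal)
        = ‖fourierCoeff (h : AddCircle (2*π) → ℂ) n‖ ^ 2 := by
      intro n
      rw [fourierBasis_repr]
      norm_num
    exact (summable_congr this).1 hs
  have hts := Summable.tsum_le_tsum (fun n => by rw [hLcoeff n, hL'coeff n]; exact key n) (hsum L) (hsum L')
  rw [tsum_sq_fourierCoeff L, tsum_sq_fourierCoeff L'] at hts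
  -- transfer to interval integrals
  have hLae : ∫ t : AddCircle (2*π), ‖(L : AddCircle (2*π) → ℂ) t‖^2 ∂haarAddCircle
      = ∫ t : AddCircle (2*π), ‖g t‖^2 ∂haarAddCircle := by
    refine integral_congr_ae ?_
    filter_upwards [ContinuousMap.coeFn_toLp (p := 2) haarAddCircle (𝕜 := ℂ)
      (⟨g, hgc⟩ : C(AddCircle (2*π), ℂ))] with t ht
    rw [ht]; rfl
  have hL'ae : ∫ t : AddCircle (2*π), ‖(L' : AddCircle (2*π) → ℂ) t‖^2 ∂haarAddCircle
      = ∫ t : AddCircle (2*π), ‖g' t‖^2 ∂haarAddCircle := by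
    refine integral_congr_ae ?_
    filter_upwards [ContinuousMap.coeFn_toLp (p := 2) haarAddCircle (𝕜 := ℂ)
      (⟨g', hg'c⟩ : C(AddCircle (2*π), ℂ))] with t ht
    rw [ht]; rfl
  rw [hLae, hL'ae] at hts
  have htrans : ∀ (h : AddCircle (2*π) → ℂ) (u : ℝ → ℂ), (∀ x ∈ Set.Ico (-π) (-π + 2*π), h x = u x) →
      Continuous h →
      ∫ x in (-π)..(-π+2*π), ‖u x‖^2 = (2*π) * ∫ t : AddCircle (2*π), ‖h t‖^2 ∂haarAddCircle := by
    intro h u hhu hc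
    have h1 : ∫ x in (-π)..(-π+2*π), ‖u x‖^2 = ∫ x in (-π)..(-π+2*π), ‖h (x : AddCircle (2*π))‖^2 := by
      rw [intervalIntegral.integral_of_le hab.le, intervalIntegral.integral_of_le hab.le,
        integral_Ioc_eq_integral_Ioo, integral_Ioc_eq_integral_Ioo]
      refine setIntegral_congr_fun measurableSet_Ioo fun x hx => ?_
      rw [hhu x (Set.Ioo_subset_Ico_self hx)]
    rw [h1, AddCircle.intervalIntegral_preimage (2*π) (-π) (fun t => ‖h t‖^2)]
    rw [volume_eq_smul_haarAddCircle, MeasureTheory.integral_smul_measure,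
      ENNReal.toReal_ofReal Real.two_pi_pos.le, smul_eq_mul]
  have hgu : ∀ x ∈ Set.Ico (-π) (-π + 2*π), g x = F x := fun x hx =>
    AddCircle.liftIco_coe_apply hx
  have hg'u : ∀ x ∈ Set.Ico (-π) (-π + 2*π), g' x = F' x := fun x hx =>
    AddCircle.liftIco_coe_apply hx
  have e1 := htrans g F hgu hgc
  have e2 := htrans g' F' hg'u hg'c
  have hnf : ∀ r : ℝ, ‖(r : ℂ)‖^2 = r^2 := by
    intro r; rw [Complex.norm_real]; exact sq_abs r
  have e1' : ∫ x in (-π)..(-π+2*π), f x ^ 2 = (2*π) * ∫ t : AddCircle (2*π), ‖g t‖^2 ∂haarAddCircle := by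
    rw [← e1]
    refine intervalIntegral.integral_congr fun x _ => (hnf (f x)).symm
  have e2' : ∫ x in (-π)..(-π+2*π), f' x ^ 2 = (2*π) * ∫ t : AddCircle (2*π), ‖g' t‖^2 ∂haarAddCircle := by
    rw [← e2]
    refine intervalIntegral.integral_congr fun x _ => (hnf (f' x)).symm
  rw [h2pi] at e1' e2'
  rw [e1', e2']
  exact mul_le_mul_of_nonneg_left hts Real.two_pi_pos.le

end Wirtinger

lemma contVecL (a : ℝ) : Continuous fun s : ℝ => (![a, s] : Vec2) := by
  refine continuous_pi fun i => ?_
  fin_cases i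
  · simpa using continuous_const
  · simpa using continuous_id'

lemma contVecR (b : ℝ) : Continuous fun s : ℝ => (![s, b] : Vec2) := by
  refine continuous_pi fun i => ?_
  fin_cases i
  · simpa using continuous_id'
  · simpa using continuous_const

lemma contVec2 : Continuous fun p : ℝ × ℝ => (![p.1, p.2] : Vec2) := by
  refine continuous_pi fun i => ?_
  fin_cases i
  · simpa using continuous_fst
  · simpa using continuous_snd

lemma vec_eta (x : Vec2) : (![x 0, x 1] : Vec2) = x := by
  funext i; fin_cases i <;> rfl

lemma neg_pi_le_pi : (-π : ℝ) ≤ π := by linarith [Real.pi_pos]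

lemma contSlice (g : Vec2 → ℝ) (hg : Continuous g) (a : ℝ) :
    Continuous fun b : ℝ => g ![a, b] := hg.comp (contVecL a)

/-- Fubini for continuous functions on the square. -/
lemma integral_Omega2 (h : Vec2 → ℝ) (hc : Continuous h) :
    ∫ x in Omega2, h x = ∫ a in (-π)..π, ∫ b in (-π)..π, h ![a, b] := by
  have hmp := MeasureTheory.volume_preserving_finTwoArrow ℝ
  have hemb := (MeasurableEquiv.finTwoArrow (α := ℝ)).measurableEmbedding
  have happ : ∀ x : Vec2, (MeasurableEquiv.finTwoArrow x) = (x 0, x 1) := by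
    intro x; simp [MeasurableEquiv.finTwoArrow, MeasurableEquiv.piFinTwo]
  have hpre : (⇑(MeasurableEquiv.finTwoArrow (α := ℝ))) ⁻¹'
      ((Set.Icc (-π) π) ×ˢ (Set.Icc (-π) π)) = Omega2 := by
    ext x
    simp only [Set.mem_preimage, happ, Set.mem_prod, Set.mem_Icc, Omega2, Pi.le_def,
      Fin.forall_fin_two]
    constructor
    · rintro ⟨⟨h1, h2⟩, h3, h4⟩; exact ⟨⟨h1, h3⟩, h2, h4⟩
    · rintro ⟨⟨h1, h3⟩, h2, h4⟩; exact ⟨⟨h1, h2⟩, h3, h4⟩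
  have h1 := hmp.setIntegral_preimage_emb hemb (fun p => h ![p.1, p.2])
    ((Set.Icc (-π) π) ×ˢ (Set.Icc (-π) π))
  rw [hpre] at h1
  have h2 : ∀ x : Vec2, h ![(MeasurableEquiv.finTwoArrow x).1, (MeasurableEquiv.finTwoArrow x).2]
      = h x := by
    intro x; rw [happ]; exact congrArg h (vec_eta x)
  rw [show (fun x : Vec2 => h ![(MeasurableEquiv.finTwoArrow x).1,
      (MeasurableEquiv.finTwoArrow x).2]) = h from funext h2] at h1
  have hcp : Continuous fun p : ℝ × ℝ => h ![p.1, p.2] := hc.comp contVec2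
  have hint : IntegrableOn (fun p : ℝ × ℝ => h ![p.1, p.2])
      ((Set.Icc (-π) π) ×ˢ (Set.Icc (-π) π)) (volume.prod volume) := by
    rw [← Measure.volume_eq_prod]
    exact hcp.continuousOn.integrableOn_compact (isCompact_Icc.prod isCompact_Icc)
  rw [h1, Measure.volume_eq_prod, setIntegral_prod _ hint]
  rw [integral_Icc_eq_integral_Ioc, ← intervalIntegral.integral_of_le neg_pi_le_pi]
  refine intervalIntegral.integral_congr fun a _ => ?_
  rw [integral_Icc_eq_integral_Ioc, ← intervalIntegral.integral_of_le neg_pi_le_pi]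

/-- derivative along the first coordinate -/
lemma lineDeriv0 (u : Vec2 → ℝ) (hu : ContDiff ℝ 1 u) (a b : ℝ) :
    HasDerivAt (fun s => u ![s, b]) (pderiv2 0 u ![a, b]) a := by
  have hline : HasDerivAt
      (fun s : ℝ => s • (Pi.single 0 1 : Vec2) + b • (Pi.single 1 1 : Vec2))
      (Pi.single 0 1 : Vec2) a := by
    simpa using ((hasDerivAt_id a).smul_const (Pi.single 0 1 : Vec2)).add_const
      (b • (Pi.single 1 1 : Vec2))
  have heq : (fun s : ℝ => s • (Pi.single 0 1 : Vec2) + b • (Pi.single 1 1 : Vec2))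
      = fun s => (![s, b] : Vec2) := by
    funext s i; fin_cases i <;> simp
  rw [heq] at hline
  have := (((hu.differentiable one_ne_zero) ![a, b]).hasFDerivAt).comp_hasDerivAt a hline
  exact this

lemma lineDeriv1 (u : Vec2 → ℝ) (hu : ContDiff ℝ 1 u) (a b : ℝ) :
    HasDerivAt (fun s => u ![a, s]) (pderiv2 1 u ![a, b]) b := by
  have hline : HasDerivAt
      (fun s : ℝ => s • (Pi.single 1 1 : Vec2) + a • (Pi.single 0 1 : Vec2))
      (Pi.single 1 1 : Vec2) b := by
    simpa using ((hasDerivAt_id b).smul_const (Pi.single 1 1 : Vec2)).add_const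
      (a • (Pi.single 0 1 : Vec2))
  have heq : (fun s : ℝ => s • (Pi.single 1 1 : Vec2) + a • (Pi.single 0 1 : Vec2))
      = fun s => (![a, s] : Vec2) := by
    funext s i; fin_cases i <;> simp
  rw [heq] at hline
  have := (((hu.differentiable one_ne_zero) ![a, b]).hasFDerivAt).comp_hasDerivAt b hline
  exact this

/-- fderiv of a periodic function is periodic -/
lemma fderiv_shift (u : Vec2 → ℝ) (hu : Differentiable ℝ u) (c : Vec2)
    (h : ∀ y, u (y + c) = u y) (x : Vec2) : fderiv ℝ u (x + c) = fderiv ℝ u x := by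
  have h1 : HasFDerivAt (fun y : Vec2 => u (y + c))
      ((fderiv ℝ u (x + c)).comp (ContinuousLinearMap.id ℝ Vec2)) x :=
    (hu (x + c)).hasFDerivAt.comp x ((hasFDerivAt_id x).add_const c)
  rw [ContinuousLinearMap.comp_id] at h1
  have h2 : HasFDerivAt u (fderiv ℝ u (x + c)) x :=
    h1.congr_of_eventuallyEq (Filter.Eventually.of_forall fun y => (h y).symm)
  exact h2.fderiv.symm ▸ rfl

lemma shift0 (a b : ℝ) : ((![a, b] : Vec2) + fun i => 2*π*((![1, 0] : Fin 2 → ℤ) i : ℝ))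
    = ![a + 2*π, b] := by
  funext i; fin_cases i <;> simp

lemma shift1 (a b : ℝ) : ((![a, b] : Vec2) + fun i => 2*π*((![0, 1] : Fin 2 → ℤ) i : ℝ))
    = ![a, b + 2*π] := by
  funext i; fin_cases i <;> simp

/-- Cauchy-Schwarz on the interval -/
lemma cs_interval (w : ℝ → ℝ) (hw : Continuous w) :
    (∫ b in (-π)..π, w b)^2 ≤ (2*π) * ∫ b in (-π)..π, (w b)^2 := by
  have hπ := Real.pi_pos
  set S : ℝ := ∫ b in (-π)..π, w b with hS
  set Q : ℝ := ∫ b in (-π)..π, (w b)^2 with hQ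
  set c : ℝ := S / (2*π) with hc
  have h0 : 0 ≤ ∫ b in (-π)..π, (w b - c)^2 :=
    intervalIntegral.integral_nonneg neg_pi_le_pi (fun x _ => sq_nonneg _)
  have hexp : ∫ b in (-π)..π, (w b - c)^2 = Q - 2*c*S + (2*π)*c^2 := by
    have h1 : ∀ b, (w b - c)^2 = (w b)^2 - 2*c * w b + c^2 := fun b => by ring
    simp_rw [h1]
    rw [intervalIntegral.integral_add (f := fun b => w b ^ 2 - 2*c*w b) (g := fun _ => c^2) (((hw.pow 2).sub
        ((continuous_const.mul hw))).intervalIntegrable _ _)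
      (continuous_const.intervalIntegrable _ _),
      intervalIntegral.integral_sub (f := fun b => w b ^ 2) (g := fun b => 2*c*w b) ((hw.pow 2).intervalIntegrable _ _)
        ((continuous_const.mul hw).intervalIntegrable _ _),
      intervalIntegral.integral_const_mul, intervalIntegral.integral_const]
    rw [← hS, ← hQ]
    have : (π - -π) = 2*π := by ring
    rw [this, smul_eq_mul]
  rw [hexp] at h0
  have hcc : 2*c*S - (2*π)*c^2 = S^2/(2*π) := by
    rw [hc]; field_simp; ring
  have h3 : S^2/(2*π) ≤ Q := by linarith
  rw [div_le_iff₀ (by positivity : (0:ℝ) < 2*π)] at h3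
  nlinarith [h3]

theorem poincare2 (u : Vec2 → ℝ) (hu : ContDiff ℝ 1 u) (hper : Per2 u)
    (hmean : ∫ x in Omega2, u x = 0) :
    ∫ x in Omega2, (u x)^2 ≤ ∫ x in Omega2, ((pderiv2 0 u x)^2 + (pderiv2 1 u x)^2) := by
  have hπ := Real.pi_pos
  have huc : Continuous u := hu.continuous
  have hud : Differentiable ℝ u := hu.differentiable one_ne_zero
  have hfc : Continuous (fderiv ℝ u) := hu.continuous_fderiv one_ne_zero
  have hP0c : Continuous (pderiv2 0 u) := hfc.clm_apply continuous_const
  have hP1c : Continuous (pderiv2 1 u) := hfc.clm_apply continuous_const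
  have hHc : Continuous (fun p : ℝ × ℝ => u ![p.1, p.2]) := huc.comp contVec2
  have hP0pc : Continuous (fun p : ℝ × ℝ => pderiv2 0 u ![p.1, p.2]) := hP0c.comp contVec2
  have hP1pc : Continuous (fun p : ℝ × ℝ => pderiv2 1 u ![p.1, p.2]) := hP1c.comp contVec2
  -- periodicity in coordinate form
  have hu0' : ∀ a b : ℝ, u ![a + 2*π, b] = u ![a, b] := by
    intro a b
    have := hper ![a, b] ![1, 0]
    rwa [shift0 a b] at this
  have hu1' : ∀ a b : ℝ, u ![a, b + 2*π] = u ![a, b] := by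
    intro a b
    have := hper ![a, b] ![0, 1]
    rwa [shift1 a b] at this
  have hPi0' : ∀ (i : Fin 2) (a b : ℝ), pderiv2 i u ![a + 2*π, b] = pderiv2 i u ![a, b] := by
    intro i a b
    have hsh := fderiv_shift u hud _ (fun y => hper y ![1, 0]) ![a, b]
    rw [shift0 a b] at hsh
    unfold pderiv2
    rw [hsh]
  have hPi1' : ∀ (i : Fin 2) (a b : ℝ), pderiv2 i u ![a, b + 2*π] = pderiv2 i u ![a, b] := by
    intro i a b
    have hsh := fderiv_shift u hud _ (fun y => hper y ![0, 1]) ![a, b]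
    rw [shift1 a b] at hsh
    unfold pderiv2
    rw [hsh]
  -- the mean in the second variable
  set m : ℝ → ℝ := fun a => (∫ b in (-π)..π, u ![a, b]) / (2*π) with hm
  have hm'raw : ∀ a₀ : ℝ, HasDerivAt (fun a => ∫ b in (-π)..π, u ![a, b])
      (∫ b in (-π)..π, pderiv2 0 u ![a₀, b]) a₀ := by
    intro a₀
    obtain ⟨C, hC⟩ := (isCompact_Icc.prod isCompact_Icc :
        IsCompact ((Set.Icc (a₀-1) (a₀+1)) ×ˢ (Set.Icc (-π) π))).exists_bound_of_continuousOn
      hP0pc.continuousOn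
    refine (intervalIntegral.hasDerivAt_integral_of_dominated_loc_of_deriv_le
      (F := fun a b => u ![a, b]) (F' := fun a b => pderiv2 0 u ![a, b])
      (bound := fun _ => C) (Metric.ball_mem_nhds a₀ one_pos) ?_ ?_ ?_ ?_ ?_ ?_).2
    · exact Filter.Eventually.of_forall fun a =>
        ((contSlice u huc a).aestronglyMeasurable).restrict
    · exact (contSlice u huc a₀).intervalIntegrable _ _
    · exact ((contSlice (pderiv2 0 u) hP0c a₀).aestronglyMeasurable).restrict
    · refine Filter.Eventually.of_forall fun b hb => fun x hx => ?_
      refine hC (x, b) ⟨?_, ?_⟩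
      · have := Metric.mem_ball.1 hx
        rw [Real.dist_eq] at this
        constructor <;> [linarith [abs_le.1 this.le |>.1]; linarith [abs_le.1 this.le |>.2]]
      · rw [Set.uIoc_of_le neg_pi_le_pi] at hb
        exact ⟨hb.1.le, hb.2⟩
    · exact intervalIntegrable_const
    · exact Filter.Eventually.of_forall fun b _ => fun x _ => lineDeriv0 u hu x b
  have hm' : ∀ a₀ : ℝ, HasDerivAt m
      ((∫ b in (-π)..π, pderiv2 0 u ![a₀, b]) / (2*π)) a₀ :=
    fun a₀ => (hm'raw a₀).div_const (2*π)
  set mD : ℝ → ℝ := fun a => (∫ b in (-π)..π, pderiv2 0 u ![a, b]) / (2*π) with hmD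
  have hintP0 : Continuous fun a => ∫ b in (-π)..π, pderiv2 0 u ![a, b] :=
    intervalIntegral.continuous_parametric_intervalIntegral_of_continuous'
      (f := fun a b => pderiv2 0 u ![a, b]) hP0pc (-π) π
  have hintP1sq : Continuous fun a => ∫ b in (-π)..π, (pderiv2 1 u ![a, b])^2 :=
    intervalIntegral.continuous_parametric_intervalIntegral_of_continuous'
      (f := fun a b => (pderiv2 1 u ![a, b])^2) ((hP1pc.pow 2).congr fun _ => rfl) (-π) π
  have hintP0sq : Continuous fun a => ∫ b in (-π)..π, (pderiv2 0 u ![a, b])^2 :=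
    intervalIntegral.continuous_parametric_intervalIntegral_of_continuous'
      (f := fun a b => (pderiv2 0 u ![a, b])^2) ((hP0pc.pow 2).congr fun _ => rfl) (-π) π
  have hintH2 : Continuous fun a => ∫ b in (-π)..π, (u ![a, b])^2 :=
    intervalIntegral.continuous_parametric_intervalIntegral_of_continuous'
      (f := fun a b => (u ![a, b])^2) ((hHc.pow 2).congr fun _ => rfl) (-π) π
  have hmDc : Continuous mD := hintP0.div_const _
  have hmc : Continuous m := by
    refine continuous_iff_continuousAt.2 fun a => ((hm' a).continuousAt)
  -- m is periodic with zero mean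
  have hmper : ∀ a, m (a + 2*π) = m a := by
    intro a
    rw [hm]
    simp only
    congr 1
    exact intervalIntegral.integral_congr fun b _ => hu0' a b
  have hmmean : ∫ a in (-π)..π, m a = 0 := by
    rw [hm]
    simp only
    rw [intervalIntegral.integral_div]
    rw [← integral_Omega2 u huc] at *
    rw [hmean, zero_div]
  -- Wirtinger for m
  have hWm : ∫ a in (-π)..π, (m a)^2 ≤ ∫ a in (-π)..π, (mD a)^2 :=
    wirtinger1 m mD hm' hmDc hmper hmmean
  -- inner Wirtinger for each slice
  have hinner : ∀ a : ℝ, ∫ b in (-π)..π, (u ![a, b])^2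
      ≤ (∫ b in (-π)..π, (pderiv2 1 u ![a, b])^2) + 2*π*(m a)^2 := by
    intro a
    have hWa : ∫ b in (-π)..π, (u ![a, b] - m a)^2
        ≤ ∫ b in (-π)..π, (pderiv2 1 u ![a, b])^2 := by
      refine wirtinger1 (fun b => u ![a, b] - m a) (fun b => pderiv2 1 u ![a, b])
        (fun b => (lineDeriv1 u hu a b).sub_const (m a))
        (contSlice (pderiv2 1 u) hP1c a)
        (fun b => by show u ![a, b + 2*π] - m a = u ![a, b] - m a; rw [hu1' a b]) ?_
      show (∫ b in (-π)..π, (u ![a, b] - m a)) = 0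
      rw [intervalIntegral.integral_sub ((contSlice u huc a).intervalIntegrable _ _)
        (continuous_const.intervalIntegrable _ _), intervalIntegral.integral_const]
      rw [hm]
      simp only [smul_eq_mul]
      have h2 : (π - -π) = 2*π := by ring
      rw [h2, mul_div_cancel₀ _ (by positivity : (2*π : ℝ) ≠ 0), sub_self]
    have hEa : ∫ b in (-π)..π, (u ![a, b])^2
        = (∫ b in (-π)..π, (u ![a, b] - m a)^2) + 2*π*(m a)^2 := by
      have hpt : ∀ b, (u ![a, b])^2
          = (u ![a, b] - m a)^2 + (2*(m a)) * u ![a, b] - (m a)^2 := fun b => by ring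
      simp_rw [hpt]
      rw [intervalIntegral.integral_sub, intervalIntegral.integral_add,
        intervalIntegral.integral_const_mul, intervalIntegral.integral_const]
      · have hIu : ∫ b in (-π)..π, u ![a, b] = 2*π * m a := by
          rw [hm]
          simp only
          rw [mul_div_cancel₀ _ (by positivity : (2*π : ℝ) ≠ 0)]
        rw [hIu]
        have h2 : (π - -π) = 2*π := by ring
        rw [h2, smul_eq_mul]
        ring
      · exact (((contSlice u huc a).sub continuous_const).pow 2).intervalIntegrable _ _
      · exact (continuous_const.mul (contSlice u huc a)).intervalIntegrable _ _
      · exact ((((contSlice u huc a).sub continuous_const).pow 2).add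
          (continuous_const.mul (contSlice u huc a))).intervalIntegrable _ _
      · exact continuous_const.intervalIntegrable _ _
    rw [hEa]
    linarith [hWa]
  -- pointwise bound for mD^2
  have hmDsq : ∀ a : ℝ, (mD a)^2 ≤ (∫ b in (-π)..π, (pderiv2 0 u ![a, b])^2) / (2*π) := by
    intro a
    have hcs := cs_interval (fun b => pderiv2 0 u ![a, b]) (contSlice (pderiv2 0 u) hP0c a)
    rw [hmD]
    simp only [div_pow]
    rw [div_le_div_iff₀ (by positivity) (by positivity : (0:ℝ) < 2*π)]
    calc (∫ b in (-π)..π, pderiv2 0 u ![a, b])^2 * (2*π)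
        ≤ (2*π) * (∫ b in (-π)..π, (pderiv2 0 u ![a, b])^2) * (2*π) := by nlinarith [hcs]
      _ = (∫ b in (-π)..π, (pderiv2 0 u ![a, b])^2) * (2*π)^2 := by ring
  -- assemble
  rw [integral_Omega2 (fun x => u x ^ 2) ((huc.pow 2).congr fun _ => rfl), integral_Omega2 (fun x => pderiv2 0 u x ^ 2 + pderiv2 1 u x ^ 2) (((hP0c.pow 2).add (hP1c.pow 2)).congr fun _ => rfl)]
  have step1 : ∫ a in (-π)..π, ∫ b in (-π)..π, (u ![a, b])^2
      ≤ ∫ a in (-π)..π, ((∫ b in (-π)..π, (pderiv2 1 u ![a, b])^2) + 2*π*(m a)^2) := by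
    refine intervalIntegral.integral_mono_on neg_pi_le_pi
      (hintH2.intervalIntegrable _ _)
      ((hintP1sq.add ((continuous_const.mul (hmc.pow 2)))).intervalIntegrable _ _)
      (fun a _ => hinner a)
  have step2 : ∫ a in (-π)..π, ((∫ b in (-π)..π, (pderiv2 1 u ![a, b])^2) + 2*π*(m a)^2)
      = (∫ a in (-π)..π, ∫ b in (-π)..π, (pderiv2 1 u ![a, b])^2)
        + 2*π * ∫ a in (-π)..π, (m a)^2 := by
    rw [intervalIntegral.integral_add (g := fun a => 2*π*(m a)^2) (hintP1sq.intervalIntegrable _ _)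
      ((continuous_const.mul (hmc.pow 2)).intervalIntegrable _ _),
      intervalIntegral.integral_const_mul]
  have step3 : 2*π * ∫ a in (-π)..π, (m a)^2
      ≤ ∫ a in (-π)..π, ∫ b in (-π)..π, (pderiv2 0 u ![a, b])^2 := by
    have h1 : ∫ a in (-π)..π, (mD a)^2
        ≤ ∫ a in (-π)..π, (∫ b in (-π)..π, (pderiv2 0 u ![a, b])^2) / (2*π) := by
      refine intervalIntegral.integral_mono_on neg_pi_le_pi
        ((hmDc.pow 2).intervalIntegrable _ _)
        ((hintP0sq.div_const _).intervalIntegrable _ _)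
        (fun a _ => hmDsq a)
    rw [intervalIntegral.integral_div] at h1
    have h2 : ∫ a in (-π)..π, (m a)^2
        ≤ (∫ a in (-π)..π, ∫ b in (-π)..π, (pderiv2 0 u ![a, b])^2) / (2*π) :=
      le_trans hWm h1
    rw [le_div_iff₀ (by positivity : (0:ℝ) < 2*π)] at h2
    linarith [h2]
  have step4 : ∫ a in (-π)..π, ∫ b in (-π)..π,
      ((pderiv2 0 u ![a, b])^2 + (pderiv2 1 u ![a, b])^2)
      = (∫ a in (-π)..π, ∫ b in (-π)..π, (pderiv2 0 u ![a, b])^2)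
        + ∫ a in (-π)..π, ∫ b in (-π)..π, (pderiv2 1 u ![a, b])^2 := by
    have hin : ∀ a : ℝ, ∫ b in (-π)..π, ((pderiv2 0 u ![a, b])^2 + (pderiv2 1 u ![a, b])^2)
        = (∫ b in (-π)..π, (pderiv2 0 u ![a, b])^2)
          + ∫ b in (-π)..π, (pderiv2 1 u ![a, b])^2 := by
      intro a
      exact intervalIntegral.integral_add (((contSlice (pderiv2 0 u) hP0c a).pow 2).intervalIntegrable _ _)
        (((contSlice (pderiv2 1 u) hP1c a).pow 2).intervalIntegrable _ _)
    rw [intervalIntegral.integral_congr (fun a _ => hin a)]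
    exact intervalIntegral.integral_add (hintP0sq.intervalIntegrable _ _)
      (hintP1sq.intervalIntegrable _ _)
  rw [step4]
  calc ∫ a in (-π)..π, ∫ b in (-π)..π, (u ![a, b])^2
      ≤ (∫ a in (-π)..π, ∫ b in (-π)..π, (pderiv2 1 u ![a, b])^2)
        + 2*π * ∫ a in (-π)..π, (m a)^2 := by rw [← step2]; exact step1
    _ ≤ (∫ a in (-π)..π, ∫ b in (-π)..π, (pderiv2 1 u ![a, b])^2)
        + ∫ a in (-π)..π, ∫ b in (-π)..π, (pderiv2 0 u ![a, b])^2 := by linarith [step3]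
    _ = (∫ a in (-π)..π, ∫ b in (-π)..π, (pderiv2 0 u ![a, b])^2)
        + ∫ a in (-π)..π, ∫ b in (-π)..π, (pderiv2 1 u ![a, b])^2 := by ring

/-- Grönwall step of the targets' stability theorem.
If `‖G‖_∞ < 2`, `e(·,t)` is `2π`-periodic with zero mean, and the energy
`V(t) = ∫_Ω e(x,t)² dx` satisfies `V'(t) = -D ∫_Ω e² G - 2D ∫_Ω ‖∇e‖²`, then
`V'(t) ≤ -D(2-‖G‖_∞) V(t)` and `V(t) ≤ V(0) e^{-D(2-‖G‖_∞)t}` for `t ≥ 0`. -/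
theorem gronwall_energy_decay
    (D : ℝ) (hD : 0 < D)
    (G : Vec2 → ℝ) (hGcont : Continuous G) (hGper : Per2 G)
    (Gnorm : ℝ) (hGnorm : Gnorm = sSup ((fun x => |G x|) '' Omega2))
    (hGlt : Gnorm < 2)
    (e : Vec2 → ℝ → ℝ)
    (hper : ∀ t : ℝ, Per2 (fun x => e x t))
    (hreg : ContDiff ℝ 1 (fun p : Vec2 × ℝ => e p.1 p.2))
    (hmean : ∀ t : ℝ, ∫ x in Omega2, e x t = 0)
    (hV' : ∀ t : ℝ,
      HasDerivAt (fun s => ∫ x in Omega2, (e x s) ^ 2)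
        (-(D * ∫ x in Omega2, (e x t) ^ 2 * G x)
          - 2 * D * ∫ x in Omega2, ∑ i, (pderiv2 i (fun y => e y t) x) ^ 2) t) :
    (∀ t : ℝ, 0 ≤ t →
      deriv (fun s => ∫ x in Omega2, (e x s) ^ 2) t
        ≤ -(D * (2 - Gnorm)) * ∫ x in Omega2, (e x t) ^ 2) ∧
    (∀ t : ℝ, 0 ≤ t →
      (∫ x in Omega2, (e x t) ^ 2)
        ≤ (∫ x in Omega2, (e x 0) ^ 2) * Real.exp (-(D * (2 - Gnorm)) * t)) := by
  have hπ := Real.pi_pos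
  have hOmegaC : IsCompact Omega2 := isCompact_Icc
  have hOmegaM : MeasurableSet Omega2 := measurableSet_Icc
  have hmemΩ : (fun _ => 0 : Vec2) ∈ Omega2 := by
    constructor <;> intro i <;> simp [hπ.le]
  have hGle : ∀ x ∈ Omega2, |G x| ≤ Gnorm := by
    intro x hx
    rw [hGnorm]
    exact le_csSup ((hOmegaC.image (continuous_abs.comp hGcont)).bddAbove) ⟨x, hx, rfl⟩
  have hu : ∀ t : ℝ, ContDiff ℝ 1 (fun x => e x t) := fun t =>
    hreg.comp (contDiff_id.prodMk contDiff_const)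
  have huc : ∀ t, Continuous (fun x : Vec2 => e x t) := fun t => (hu t).continuous
  have hPc : ∀ (t : ℝ) (i : Fin 2), Continuous (pderiv2 i (fun x => e x t)) := fun t i =>
    ((hu t).continuous_fderiv one_ne_zero).clm_apply continuous_const
  have claim1 : ∀ t : ℝ, deriv (fun s => ∫ x in Omega2, (e x s) ^ 2) t
      ≤ -(D * (2 - Gnorm)) * ∫ x in Omega2, (e x t) ^ 2 := by
    intro t
    rw [(hV' t).deriv]
    have hA : -(Gnorm) * (∫ x in Omega2, (e x t)^2) ≤ ∫ x in Omega2, (e x t)^2 * G x := by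
      have hle : ∀ x ∈ Omega2, -(Gnorm) * (e x t)^2 ≤ (e x t)^2 * G x := by
        intro x hx
        have h2 := abs_le.1 (hGle x hx)
        nlinarith [sq_nonneg (e x t), h2.1]
      have hi1 : IntegrableOn (fun x => -(Gnorm) * (e x t)^2) Omega2 volume :=
        (continuous_const.mul ((huc t).pow 2)).continuousOn.integrableOn_compact hOmegaC
      have hi2 : IntegrableOn (fun x => (e x t)^2 * G x) Omega2 volume :=
        (((huc t).pow 2).mul hGcont).continuousOn.integrableOn_compact hOmegaC
      have hmono := setIntegral_mono_on hi1 hi2 hOmegaM hle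
      rwa [MeasureTheory.integral_const_mul] at hmono
    have hB : (∫ x in Omega2, (e x t)^2)
        ≤ ∫ x in Omega2, ∑ i, (pderiv2 i (fun y => e y t) x)^2 := by
      have hpoin := poincare2 (fun x => e x t) (hu t) (hper t) (hmean t)
      refine le_trans hpoin (le_of_eq ?_)
      refine setIntegral_congr_fun hOmegaM fun x _ => ?_
      rw [Fin.sum_univ_two]
    have h1 := mul_le_mul_of_nonneg_left hA hD.le
    have h2 := mul_le_mul_of_nonneg_left hB hD.le
    nlinarith [h1, h2]
  refine ⟨fun t _ => claim1 t, ?_⟩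
  intro t ht
  set c : ℝ := D * (2 - Gnorm) with hc
  have hWd : ∀ s : ℝ, HasDerivAt (fun r => (∫ x in Omega2, (e x r)^2) * Real.exp (c*r))
      ((deriv (fun r => ∫ x in Omega2, (e x r)^2) s) * Real.exp (c*s)
        + (∫ x in Omega2, (e x s)^2) * (Real.exp (c*s) * c)) s := by
    intro s
    have h1 : HasDerivAt (fun r => ∫ x in Omega2, (e x r)^2)
        (deriv (fun r => ∫ x in Omega2, (e x r)^2) s) s :=
      ((hV' s).differentiableAt).hasDerivAt
    have hmul : HasDerivAt (fun r : ℝ => c*r) c s := by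
      simpa using (hasDerivAt_id s).const_mul c
    have h2 : HasDerivAt (fun r => Real.exp (c*r)) (Real.exp (c*s) * c) s :=
      (Real.hasDerivAt_exp (c*s)).comp s hmul
    exact h1.mul h2
  have hanti : AntitoneOn (fun r => (∫ x in Omega2, (e x r)^2) * Real.exp (c*r))
      (Set.Ici 0) := by
    refine antitoneOn_of_deriv_nonpos (convex_Ici 0) ?_ ?_ ?_
    · exact (continuous_iff_continuousAt.2 fun s => (hWd s).continuousAt).continuousOn
    · intro x _
      exact ((hWd x).differentiableAt).differentiableWithinAt
    · intro x _
      rw [(hWd x).deriv]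
      have h1 := claim1 x
      have hexp : (0:ℝ) < Real.exp (c*x) := Real.exp_pos _
      have h2 := mul_le_mul_of_nonneg_right h1 hexp.le
      nlinarith [h2]
  have h1 := hanti Set.self_mem_Ici ht ht
  simp only [mul_zero, Real.exp_zero, mul_one] at h1
  have hexp : (0:ℝ) < Real.exp (c*t) := Real.exp_pos _
  rw [show (-c * t) = -(c*t) by ring, Real.exp_neg, ← div_eq_mul_inv,
    le_div_iff₀ hexp]
  exact h1
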